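/- Let G be a finite simple graph, let P = v_0-v_1-…-v_p be a path of G with p odd, p ≥ 3, whose only chord is v_0v_2, and let z be a vertex not on P adjacent to v_0 and v_p but adjacent to neither v_1 nor v_2 (a near-obstruction of Type 1). Let r be the smallest integer such that z is adjacent to v_r (so r ≥ 3). If r is odd, then z, v_0, v_1, …, v_r induce an odd cycle with v_0v_2 as its only chord; if r is even, then z, v_0, v_2, v_3, …, v_r induce a chordless odd cycle of length at least five. In either case G contains a Meyniel obstruction. -/

import Mathlib

open SimpleGraph

/-- The set of chords of a closed walk `c` in `G`: edges of `G` joining two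
vertices of `c` that are not edges of `c` (i.e. not consecutive on `c`). -/
def SimpleGraph.cycleChords {V : Type*} (G : SimpleGraph V) {u : V} (c : G.Walk u u) :
    Set (Sym2 V) :=
  {e | e ∈ G.edgeSet ∧ (∀ x ∈ e, x ∈ c.support) ∧ e ∉ c.edges}

/-- A Meyniel obstruction in `G` is an odd cycle of length at least five with
at most one chord. -/
def SimpleGraph.HasMeynielObstruction {V : Type*} (G : SimpleGraph V) : Prop :=
  ∃ (u : V) (c : G.Walk u u), c.IsCycle ∧ Odd c.length ∧ 5 ≤ c.length ∧
    (G.cycleChords c).ncard ≤ 1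

/-- `v i` and `v j` span a chord of the path `v 0 - v 1 - ⋯ - v p`: an edge of `G`
joining two non-consecutive vertices of the path (with `i < j`). -/
def SimpleGraph.IsPathChord {V : Type*} (G : SimpleGraph V) (p : ℕ) (v : ℕ → V)
    (i j : ℕ) : Prop :=
  i + 2 ≤ j ∧ j ≤ p ∧ G.Adj (v i) (v j)

namespace MeynielAux

variable {V : Type*} {G : SimpleGraph V}

/-- The walk `w 0 - w 1 - ⋯ - w n` along a chain of adjacent vertices. -/
def walkSeq (G : SimpleGraph V) (w : ℕ → V) :
    (n : ℕ) → (∀ i, i < n → G.Adj (w i) (w (i+1))) → G.Walk (w 0) (w n)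
  | 0, _ => .nil
  | n+1, h => (walkSeq G w n fun i hi => h i (hi.trans n.lt_succ_self)).concat
      (h n n.lt_succ_self)

@[simp] lemma walkSeq_length (w : ℕ → V) (n : ℕ) (h : ∀ i, i < n → G.Adj (w i) (w (i+1))) :
    (walkSeq G w n h).length = n := by
  induction n with
  | zero => rfl
  | succ n ih => simp [walkSeq, ih]

@[simp] lemma walkSeq_support (w : ℕ → V) (n : ℕ) (h : ∀ i, i < n → G.Adj (w i) (w (i+1))) :
    (walkSeq G w n h).support = (List.range (n+1)).map w := by
  induction n with
  | zero => rfl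
  | succ n ih => simp [walkSeq, ih, List.range_succ]

@[simp] lemma walkSeq_edges (w : ℕ → V) (n : ℕ) (h : ∀ i, i < n → G.Adj (w i) (w (i+1))) :
    (walkSeq G w n h).edges = (List.range n).map (fun i => s(w i, w (i+1))) := by
  induction n with
  | zero => rfl
  | succ n ih => simp [walkSeq, ih, List.range_succ]

/-- Closing up a chain of adjacent vertices through an extra vertex `z` gives a cycle. -/
lemma exists_cycle_seq (w : ℕ → V) (n : ℕ) (hn : 1 ≤ n) (z : V)
    (hadj : ∀ i, i < n → G.Adj (w i) (w (i+1)))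
    (hinj : ∀ i j, i ≤ n → j ≤ n → w i = w j → i = j)
    (hz : ∀ i, i ≤ n → z ≠ w i)
    (h0 : G.Adj z (w 0)) (hlast : G.Adj (w n) z) :
    ∃ c : G.Walk z z, c.IsCycle ∧ c.length = n + 2 ∧
      (∀ x, x ∈ c.support ↔ x = z ∨ ∃ i ≤ n, x = w i) ∧
      (∀ e, e ∈ c.edges ↔ e = s(z, w 0) ∨ (∃ i < n, e = s(w i, w (i+1))) ∨ e = s(w n, z)) := by
  refine ⟨Walk.cons h0 ((walkSeq G w n hadj).concat hlast), ?_, ?_, ?_, ?_⟩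
  · rw [Walk.cons_isCycle_iff]
    constructor
    · rw [Walk.isPath_def]
      simp only [Walk.support_concat, walkSeq_support, List.concat_eq_append]
      rw [List.nodup_append]
      refine ⟨?_, List.nodup_singleton z, ?_⟩
      · exact (List.nodup_range).map_on fun i hi j hj hij =>
          hinj i j (by simpa using Nat.lt_succ_iff.mp (List.mem_range.mp hi))
            (by simpa using Nat.lt_succ_iff.mp (List.mem_range.mp hj)) hij
      · intro a ha b hb hab
        simp only [List.mem_map, List.mem_range] at ha
        obtain ⟨i, hi, rfl⟩ := ha
        simp only [List.mem_singleton] at hb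
        exact hz i (Nat.lt_succ_iff.mp hi) (hab.trans hb).symm
    · simp only [Walk.edges_concat, walkSeq_edges, List.concat_eq_append, List.mem_append,
        List.mem_map, List.mem_range, List.mem_singleton]
      rintro (⟨i, hi, hie⟩ | hie) <;> rw [Sym2.eq_iff] at hie
      · rcases hie with ⟨h1, h2⟩ | ⟨h1, h2⟩
        · exact hz i (by omega) h1.symm
        · exact hz (i+1) hi h2.symm
      · rcases hie with ⟨h1, h2⟩ | ⟨h1, h2⟩
        · exact hz n le_rfl h1
        · exact absurd (hinj 0 n (Nat.zero_le n) le_rfl h2) (by omega)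
  · simp
  · intro x
    simp only [Walk.support_cons, Walk.support_concat, walkSeq_support, List.concat_eq_append,
      List.mem_cons, List.mem_append, List.mem_map, List.mem_range, List.mem_singleton,
      List.mem_nil_iff, or_false, Nat.lt_succ_iff]
    constructor
    · rintro (rfl | ⟨i, hi, rfl⟩ | rfl)
      · exact Or.inl rfl
      · exact Or.inr ⟨i, hi, rfl⟩
      · exact Or.inl rfl
    · rintro (rfl | ⟨i, hi, rfl⟩)
      · exact Or.inl rfl
      · exact Or.inr (Or.inl ⟨i, hi, rfl⟩)
  · intro e
    simp only [Walk.edges_cons, Walk.edges_concat, walkSeq_edges, List.concat_eq_append,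
      List.mem_cons, List.mem_append, List.mem_map, List.mem_range, List.mem_singleton,
      List.mem_nil_iff, or_false]
    constructor
    · rintro (rfl | ⟨i, hi, hie⟩ | rfl)
      · exact Or.inl rfl
      · exact Or.inr (Or.inl ⟨i, hi, hie.symm⟩)
      · exact Or.inr (Or.inr rfl)
    · rintro (rfl | ⟨i, hi, rfl⟩ | rfl)
      · exact Or.inl rfl
      · exact Or.inr (Or.inl ⟨i, hi, rfl⟩)
      · exact Or.inr (Or.inr rfl)

/-- The reindexing `v 0, v 2, v 3, …`. -/
def shift (v : ℕ → V) : ℕ → V := fun i => if i = 0 then v 0 else v (i + 1)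

@[simp] lemma shift_zero (v : ℕ → V) : shift v 0 = v 0 := rfl

lemma shift_pos (v : ℕ → V) {i : ℕ} (hi : 1 ≤ i) : shift v i = v (i + 1) := by
  simp [shift, Nat.one_le_iff_ne_zero.mp hi]

end MeynielAux

/-- Near-obstruction of Type 1: `P = v 0 - ⋯ - v p` is a path with `p` odd, `p ≥ 3`,
whose only chord is `v 0 v 2`, and `z` is a vertex off `P` adjacent to `v 0` and `v p`
but to neither `v 1` nor `v 2`.  If `r` is the smallest positive integer with `z`
adjacent to `v r`, then: if `r` is odd, `z, v 0, …, v r` induce an odd cycle with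
`v 0 v 2` as its only chord; if `r` is even, `z, v 0, v 2, v 3, …, v r` induce a
chordless odd cycle of length at least five.  In either case `G` contains a Meyniel
obstruction. -/
theorem type1_nearObstruction_meynielObstruction {V : Type*} [Fintype V]
    (G : SimpleGraph V) (p : ℕ) (v : ℕ → V) (z : V) (r : ℕ)
    (hodd : Odd p) (hp : 3 ≤ p) (hinj : Set.InjOn v (Set.Iic p))
    (hpath : ∀ i, i < p → G.Adj (v i) (v (i + 1)))
    (hchord : G.Adj (v 0) (v 2))
    (honly : ∀ i j, G.IsPathChord p v i j → i = 0 ∧ j = 2)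
    (hz : ∀ i, i ≤ p → z ≠ v i)
    (hz0 : G.Adj z (v 0)) (hzp : G.Adj z (v p))
    (hz1 : ¬ G.Adj z (v 1)) (hz2 : ¬ G.Adj z (v 2))
    (hr1 : 1 ≤ r) (hrp : r ≤ p) (hzr : G.Adj z (v r))
    (hrmin : ∀ i, 1 ≤ i → i < r → ¬ G.Adj z (v i)) :
    ((Odd r → ∃ (u : V) (c : G.Walk u u), c.IsCycle ∧ Odd c.length ∧
        {x | x ∈ c.support} = insert z (v '' Set.Iic r) ∧
        G.cycleChords c = {s(v 0, v 2)}) ∧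
     (Even r → ∃ (u : V) (c : G.Walk u u), c.IsCycle ∧ Odd c.length ∧ 5 ≤ c.length ∧
        {x | x ∈ c.support} = insert z (insert (v 0) (v '' Set.Icc 2 r)) ∧
        G.cycleChords c = ∅)) ∧
    G.HasMeynielObstruction := by
  have hvinj : ∀ i j, i ≤ p → j ≤ p → v i = v j → i = j := fun i j hi hj hij =>
    hinj (Set.mem_Iic.mpr hi) (Set.mem_Iic.mpr hj) hij
  have hr3 : 3 ≤ r := by
    by_contra h
    interval_cases r
    · exact hz1 hzr
    · exact hz2 hzr
  -- ODD case
  have hOddCase : Odd r → ∃ (u : V) (c : G.Walk u u), c.IsCycle ∧ Odd c.length ∧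
      5 ≤ c.length ∧
      {x | x ∈ c.support} = insert z (v '' Set.Iic r) ∧
      G.cycleChords c = {s(v 0, v 2)} := by
    intro hro
    obtain ⟨c, hc, hclen, hcsup, hced⟩ := MeynielAux.exists_cycle_seq (G := G) v r (by omega) z
      (fun i hi => hpath i (by omega))
      (fun i j hi hj hij => hvinj i j (by omega) (by omega) hij)
      (fun i hi => hz i (by omega)) hz0 hzr.symm
    have key1 : ∀ i, i ≤ r → G.Adj z (v i) → s(z, v i) ∈ c.edges := by
      intro i hi hadj
      rcases Nat.eq_zero_or_pos i with rfl | hpos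
      · exact (hced _).mpr (Or.inl rfl)
      · rcases eq_or_lt_of_le hi with rfl | hlt
        · exact (hced _).mpr (Or.inr (Or.inr Sym2.eq_swap))
        · exact absurd hadj (hrmin i hpos hlt)
    have key2 : ∀ i j, i < j → j ≤ r → G.Adj (v i) (v j) →
        s(v i, v j) = s(v 0, v 2) ∨ s(v i, v j) ∈ c.edges := by
      intro i j hij hj hadj
      rcases eq_or_lt_of_le (Nat.succ_le_of_lt hij) with h | h
      · exact Or.inr ((hced _).mpr (Or.inr (Or.inl ⟨i, by omega, by subst h; rfl⟩)))
      · obtain ⟨h0, h2⟩ := honly i j ⟨by omega, by omega, hadj⟩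
        subst h0; subst h2; exact Or.inl rfl
    refine ⟨z, c, hc, ?_, ?_, ?_, ?_⟩
    · obtain ⟨k, hk⟩ := hro
      exact ⟨k + 1, by omega⟩
    · omega
    · ext x
      simp only [Set.mem_setOf_eq, hcsup x, Set.mem_insert_iff, Set.mem_image, Set.mem_Iic]
      constructor
      · rintro (rfl | ⟨i, hi, rfl⟩)
        · exact Or.inl rfl
        · exact Or.inr ⟨i, hi, rfl⟩
      · rintro (rfl | ⟨i, hi, rfl⟩)
        · exact Or.inl rfl
        · exact Or.inr ⟨i, hi, rfl⟩
    · ext e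
      simp only [SimpleGraph.cycleChords, Set.mem_setOf_eq, Set.mem_singleton_iff]
      constructor
      · rintro ⟨hee, hsup, hne⟩
        induction e using Sym2.ind with
        | _ a b =>
          rw [SimpleGraph.mem_edgeSet] at hee
          have ha := (hcsup a).mp (hsup a (Sym2.mem_mk_left a b))
          have hb := (hcsup b).mp (hsup b (Sym2.mem_mk_right a b))
          rcases ha with rfl | ⟨i, hi, rfl⟩
          · rcases hb with rfl | ⟨i, hi, rfl⟩
            · exact absurd rfl hee.ne
            · exact absurd (key1 i hi hee) hne
          · rcases hb with rfl | ⟨j, hj, rfl⟩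
            · rw [Sym2.eq_swap] at hne
              exact absurd (key1 i hi hee.symm) hne
            · rcases lt_trichotomy i j with h | rfl | h
              · rcases key2 i j h hj hee with h' | h'
                · exact h'
                · exact absurd h' hne
              · exact absurd rfl hee.ne
              · rw [Sym2.eq_swap]
                rw [Sym2.eq_swap] at hne
                rcases key2 j i h hi hee.symm with h' | h'
                · exact h'
                · exact absurd h' hne
      · rintro rfl
        refine ⟨hchord, ?_, ?_⟩
        · intro x hx
          rw [Sym2.mem_iff] at hx
          rcases hx with rfl | rfl
          · exact (hcsup _).mpr (Or.inr ⟨0, by omega, rfl⟩)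
          · exact (hcsup _).mpr (Or.inr ⟨2, by omega, rfl⟩)
        · intro hmem
          rcases (hced _).mp hmem with h | ⟨i, hi, h⟩ | h <;> rw [Sym2.eq_iff] at h
          · rcases h with ⟨h1, h2⟩ | ⟨h1, h2⟩
            · exact hz 0 (by omega) h1.symm
            · exact hz 2 (by omega) h2.symm
          · rcases h with ⟨h1, h2⟩ | ⟨h1, h2⟩
            · have e1 := hvinj 0 i (by omega) (by omega) h1
              have e2 := hvinj 2 (i+1) (by omega) (by omega) h2
              omega
            · have e1 := hvinj 0 (i+1) (by omega) (by omega) h1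
              omega
          · rcases h with ⟨h1, h2⟩ | ⟨h1, h2⟩
            · exact hz 2 (by omega) h2.symm
            · exact hz 0 (by omega) h1.symm
  -- EVEN case
  have hEvenCase : Even r → ∃ (u : V) (c : G.Walk u u), c.IsCycle ∧ Odd c.length ∧
      5 ≤ c.length ∧
      {x | x ∈ c.support} = insert z (insert (v 0) (v '' Set.Icc 2 r)) ∧
      G.cycleChords c = ∅ := by
    intro hre
    have hr4 : 4 ≤ r := by
      rcases hre with ⟨k, hk⟩; omega
    set w : ℕ → V := MeynielAux.shift v with hw
    have hwval : ∀ i, 1 ≤ i → w i = v (i + 1) := fun i hi => MeynielAux.shift_pos v hi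
    have hwlast : w (r - 1) = v r := by
      rw [hwval (r-1) (by omega)]
      congr 1
      omega
    have hwadj : ∀ i, i < r - 1 → G.Adj (w i) (w (i+1)) := by
      intro i hi
      rcases Nat.eq_zero_or_pos i with rfl | hpos
      · rw [show w 0 = v 0 from rfl, hwval 1 le_rfl]
        exact hchord
      · rw [hwval i hpos, hwval (i+1) (by omega)]
        exact hpath (i+1) (by omega)
    have hwidx : ∀ i, i ≤ r - 1 → ∃ k, k ≤ p ∧ w i = v k ∧ (i = 0 → k = 0) ∧ (1 ≤ i → k = i + 1) := by
      intro i hi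
      rcases Nat.eq_zero_or_pos i with rfl | hpos
      · exact ⟨0, by omega, rfl, fun _ => rfl, fun h => absurd h (by omega)⟩
      · exact ⟨i + 1, by omega, hwval i hpos, fun h => absurd h (by omega), fun _ => rfl⟩
    have hwinj : ∀ i j, i ≤ r - 1 → j ≤ r - 1 → w i = w j → i = j := by
      intro i j hi hj hij
      obtain ⟨a, hap, hwa, ha0, ha1⟩ := hwidx i hi
      obtain ⟨b, hbp, hwb, hb0, hb1⟩ := hwidx j hj
      rw [hwa, hwb] at hij
      have := hvinj a b hap hbp hij
      rcases Nat.eq_zero_or_pos i with rfl | hip <;> rcases Nat.eq_zero_or_pos j with rfl | hjp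
      · rfl
      · have := ha0 rfl; have := hb1 hjp; omega
      · have := hb0 rfl; have := ha1 hip; omega
      · have := ha1 hip; have := hb1 hjp; omega
    have hwz : ∀ i, i ≤ r - 1 → z ≠ w i := by
      intro i hi
      obtain ⟨a, hap, hwa, _, _⟩ := hwidx i hi
      rw [hwa]; exact hz a hap
    obtain ⟨c, hc, hclen, hcsup, hced⟩ := MeynielAux.exists_cycle_seq (G := G) w (r - 1)
      (by omega) z hwadj hwinj hwz (by rw [show w 0 = v 0 from rfl]; exact hz0)
      (by rw [hwlast]; exact hzr.symm)
    have key1 : ∀ i, i ≤ r - 1 → G.Adj z (w i) → s(z, w i) ∈ c.edges := by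
      intro i hi hadj
      rcases Nat.eq_zero_or_pos i with rfl | hpos
      · exact (hced _).mpr (Or.inl rfl)
      · rcases eq_or_lt_of_le hi with rfl | hlt
        · exact (hced _).mpr (Or.inr (Or.inr Sym2.eq_swap))
        · rw [hwval i hpos] at hadj
          exact absurd hadj (hrmin (i+1) (by omega) (by omega))
    have key2 : ∀ i j, i < j → j ≤ r - 1 → G.Adj (w i) (w j) → s(w i, w j) ∈ c.edges := by
      intro i j hij hj hadj
      rcases eq_or_lt_of_le (Nat.succ_le_of_lt hij) with h | h
      · exact (hced _).mpr (Or.inr (Or.inl ⟨i, by omega, by subst h; rfl⟩))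
      · rcases Nat.eq_zero_or_pos i with rfl | hpos
        · rw [show w 0 = v 0 from rfl, hwval j (by omega)] at hadj
          obtain ⟨-, h2⟩ := honly 0 (j+1) ⟨by omega, by omega, hadj⟩
          omega
        · rw [hwval i hpos, hwval j (by omega)] at hadj
          obtain ⟨h1, -⟩ := honly (i+1) (j+1) ⟨by omega, by omega, hadj⟩
          omega
    refine ⟨z, c, hc, ?_, ?_, ?_, ?_⟩
    · rw [hclen]
      rcases hre with ⟨k, hk⟩
      exact ⟨k, by omega⟩
    · omega
    · ext x
      simp only [Set.mem_setOf_eq, hcsup x, Set.mem_insert_iff, Set.mem_image, Set.mem_Icc]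
      constructor
      · rintro (rfl | ⟨i, hi, rfl⟩)
        · exact Or.inl rfl
        · rcases Nat.eq_zero_or_pos i with rfl | hpos
          · exact Or.inr (Or.inl rfl)
          · exact Or.inr (Or.inr ⟨i + 1, ⟨by omega, by omega⟩, (hwval i hpos).symm⟩)
      · rintro (rfl | rfl | ⟨j, ⟨hj2, hjr⟩, rfl⟩)
        · exact Or.inl rfl
        · exact Or.inr ⟨0, by omega, rfl⟩
        · refine Or.inr ⟨j - 1, by omega, ?_⟩
          rw [hwval (j-1) (by omega)]
          congr 1
          omega
    · ext e
      simp only [SimpleGraph.cycleChords, Set.mem_setOf_eq, Set.mem_empty_iff_false, iff_false]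
      rintro ⟨hee, hsup, hne⟩
      induction e using Sym2.ind with
      | _ a b =>
        rw [SimpleGraph.mem_edgeSet] at hee
        have ha := (hcsup a).mp (hsup a (Sym2.mem_mk_left a b))
        have hb := (hcsup b).mp (hsup b (Sym2.mem_mk_right a b))
        rcases ha with rfl | ⟨i, hi, rfl⟩
        · rcases hb with rfl | ⟨i, hi, rfl⟩
          · exact hee.ne rfl
          · exact hne (key1 i hi hee)
        · rcases hb with rfl | ⟨j, hj, rfl⟩
          · rw [Sym2.eq_swap] at hne
            exact hne (key1 i hi hee.symm)
          · rcases lt_trichotomy i j with h | rfl | h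
            · exact hne (key2 i j h hj hee)
            · exact hee.ne rfl
            · rw [Sym2.eq_swap] at hne
              exact hne (key2 j i h hi hee.symm)
  refine ⟨⟨fun h => ?_, hEvenCase⟩, ?_⟩
  · obtain ⟨u, c, hc, hlen, -, hsup, hch⟩ := hOddCase h
    exact ⟨u, c, hc, hlen, hsup, hch⟩
  rcases Nat.even_or_odd r with hre | hro
  · obtain ⟨u, c, hc, hlen, h5, -, hch⟩ := hEvenCase hre
    exact ⟨u, c, hc, hlen, h5, by rw [hch]; simp⟩
  · obtain ⟨u, c, hc, hlen, h5, -, hch⟩ := hOddCase hro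
    exact ⟨u, c, hc, hlen, h5, by rw [hch]; simp⟩
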